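/- arXiv:1107.2552 — 6 statements merged into one kernel-verified Lean document; each statement's English description precedes it below -/
import Mathlib

section
/- Let s, m be positive integers with max{s,m} ≥ 2 and let p = min{s,m}. Then there is a constant C such that for all integers n ≥ 1, ∑_{k ∈ ℤ, k ≠ 0, k ≠ −2n} 1/(|k|^s · |2n−k|^m) ≤ C/n^p. -/
open Real

lemma aux_key (s m : ℕ) (hs : 1 ≤ s) (hm : 1 ≤ m) (a b nn : ℝ)
    (ha : 1 ≤ a) (hb : 1 ≤ b) (hn : 1 ≤ nn) (hab : nn + nn ≤ a + b) :
    1 / (a ^ s * b ^ m) ≤ (1 / a ^ (max s m) + 1 / b ^ (max s m)) / nn ^ (min s m) := by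
  have ha0 : (0:ℝ) < a := by linarith
  have hb0 : (0:ℝ) < b := by linarith
  have hn0 : (0:ℝ) < nn := by linarith
  rcases le_total a b with h | h
  · have hnb : nn ≤ b := by linarith
    have key : a ^ (max s m) * nn ^ (min s m) ≤ a ^ s * b ^ m := by
      have e1 : max s m = s + (m - min s m) := by omega
      have e2 : m = (m - min s m) + min s m := by omega
      calc a ^ (max s m) * nn ^ (min s m)
          = a ^ s * (a ^ (m - min s m) * nn ^ (min s m)) := by rw [e1, pow_add]; ring
        _ ≤ a ^ s * (b ^ (m - min s m) * b ^ (min s m)) := by gcongr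
        _ = a ^ s * b ^ m := by rw [← pow_add, ← e2]
    calc 1 / (a ^ s * b ^ m) ≤ 1 / (a ^ (max s m) * nn ^ (min s m)) :=
          one_div_le_one_div_of_le (by positivity) key
      _ = (1 / a ^ (max s m)) / nn ^ (min s m) := by rw [div_div]
      _ ≤ (1 / a ^ (max s m) + 1 / b ^ (max s m)) / nn ^ (min s m) := by
          gcongr
          exact le_add_of_nonneg_right (by positivity)
  · have hna : nn ≤ a := by linarith
    have key : b ^ (max s m) * nn ^ (min s m) ≤ a ^ s * b ^ m := by
      have e1 : max s m = m + (s - min s m) := by omega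
      have e2 : s = (s - min s m) + min s m := by omega
      calc b ^ (max s m) * nn ^ (min s m)
          = (b ^ (s - min s m) * nn ^ (min s m)) * b ^ m := by rw [e1, pow_add]; ring
        _ ≤ (a ^ (s - min s m) * a ^ (min s m)) * b ^ m := by gcongr
        _ = a ^ s * b ^ m := by rw [← pow_add, ← e2]
    calc 1 / (a ^ s * b ^ m) ≤ 1 / (b ^ (max s m) * nn ^ (min s m)) :=
          one_div_le_one_div_of_le (by positivity) key
      _ = (1 / b ^ (max s m)) / nn ^ (min s m) := by rw [div_div]
      _ ≤ (1 / a ^ (max s m) + 1 / b ^ (max s m)) / nn ^ (min s m) := by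
          gcongr
          exact le_add_of_nonneg_left (by positivity)

/-- Equality (60): for positive integers s, m with max{s,m} ≥ 2 and p = min{s,m},
∑_{k ≠ 0, −2n} 1/(|k|^s·|2n−k|^m) = O(1/n^p). -/
theorem stmt_1 (s m : ℕ) (hs : 1 ≤ s) (hm : 1 ≤ m) (hmax : 2 ≤ max s m) :
    ∃ C : ℝ, ∀ n : ℕ, 1 ≤ n →
      (∑' k : ℤ, if k ≠ 0 ∧ k ≠ -(2 * (n : ℤ)) then
          1 / (|(k : ℝ)| ^ s * |2 * (n : ℝ) - (k : ℝ)| ^ m) else 0)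
        ≤ C / (n : ℝ) ^ (min s m) := by
  set q := max s m with hqdef
  set p := min s m with hpdef
  have hf : Summable (fun k : ℤ => |1 / (k:ℝ) ^ q|) :=
    summable_abs_iff.mpr (Real.summable_one_div_int_pow.mpr (by omega))
  refine ⟨2 * ∑' k : ℤ, |1 / (k:ℝ) ^ q|, fun n hn => ?_⟩
  have hn1 : (1:ℝ) ≤ (n:ℝ) := by exact_mod_cast hn
  have hf2 : Summable (fun k : ℤ => |1 / ((2 * (n:ℤ) - k : ℤ) : ℝ) ^ q|) := by
    have := (Equiv.subLeft (2 * (n:ℤ))).summable_iff.mpr hf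
    simpa [Function.comp_def, Equiv.subLeft_apply] using this
  set F : ℤ → ℝ := fun k => if k ≠ 0 ∧ k ≠ -(2 * (n : ℤ)) then
      1 / (|(k : ℝ)| ^ s * |2 * (n : ℝ) - (k : ℝ)| ^ m) else 0 with hFdef
  set G : ℤ → ℝ := fun k =>
      (|1 / (k:ℝ) ^ q| + |1 / ((2 * (n:ℤ) - k : ℤ) : ℝ) ^ q|) / (n:ℝ) ^ p with hGdef
  have hF0 : ∀ k, 0 ≤ F k := by
    intro k
    simp only [hFdef]
    split <;> positivity
  have hFG : ∀ k, F k ≤ G k := by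
    intro k
    simp only [hFdef, hGdef]
    split
    · rename_i hk
      obtain ⟨hk0, -⟩ := hk
      by_cases hk2 : k = 2 * (n:ℤ)
      · have : |2 * (n:ℝ) - (k:ℝ)| = 0 := by
          rw [abs_eq_zero]
          have : ((k:ℤ):ℝ) = 2 * (n:ℝ) := by rw [hk2]; push_cast; ring
          linarith [this]
        rw [this, zero_pow (by omega : m ≠ 0), mul_zero, div_zero]
        positivity
      · have ha : (1:ℝ) ≤ |(k:ℝ)| := by
          have : (1:ℤ) ≤ |k| := Int.one_le_abs hk0
          calc (1:ℝ) ≤ ((|k| : ℤ) : ℝ) := by exact_mod_cast this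
            _ = |(k:ℝ)| := by push_cast; rfl
        have hb : (1:ℝ) ≤ |2 * (n:ℝ) - (k:ℝ)| := by
          have h1 : (1:ℤ) ≤ |2 * (n:ℤ) - k| := Int.one_le_abs (by omega)
          calc (1:ℝ) ≤ ((|2 * (n:ℤ) - k| : ℤ) : ℝ) := by exact_mod_cast h1
            _ = |2 * (n:ℝ) - (k:ℝ)| := by push_cast; rfl
        have hab : (n:ℝ) + (n:ℝ) ≤ |(k:ℝ)| + |2 * (n:ℝ) - (k:ℝ)| := by
          have := abs_add_le (k:ℝ) (2 * (n:ℝ) - (k:ℝ))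
          have h2 : |(k:ℝ) + (2 * (n:ℝ) - (k:ℝ))| = 2 * (n:ℝ) := by
            rw [show (k:ℝ) + (2 * (n:ℝ) - (k:ℝ)) = 2 * (n:ℝ) by ring]
            rw [abs_of_nonneg (by linarith)]
          linarith
        have := aux_key s m hs hm |(k:ℝ)| |2 * (n:ℝ) - (k:ℝ)| (n:ℝ) ha hb hn1 hab
        refine this.trans (le_of_eq ?_)
        congr 1
        have e1 : |1 / (k:ℝ) ^ q| = 1 / |(k:ℝ)| ^ q := by
          rw [abs_div, abs_one, abs_pow]
        have e2 : |1 / ((2 * (n:ℤ) - k : ℤ) : ℝ) ^ q| = 1 / |2 * (n:ℝ) - (k:ℝ)| ^ q := by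
          rw [abs_div, abs_one, abs_pow]
          congr 2
          push_cast
          ring
        rw [e1, e2]
    · positivity
  have hG : Summable G := (hf.add hf2).div_const _
  have hF : Summable F := Summable.of_nonneg_of_le hF0 hFG hG
  calc (∑' k, F k) ≤ ∑' k, G k := Summable.tsum_le_tsum hFG hF hG
    _ = (∑' k : ℤ, (|1 / (k:ℝ) ^ q| + |1 / ((2 * (n:ℤ) - k : ℤ) : ℝ) ^ q|)) / (n:ℝ) ^ p := by
        rw [hGdef]; exact tsum_div_const
    _ = ((∑' k : ℤ, |1 / (k:ℝ) ^ q|) + ∑' k : ℤ, |1 / ((2 * (n:ℤ) - k : ℤ) : ℝ) ^ q|) / (n:ℝ) ^ p := by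
        rw [Summable.tsum_add hf hf2]
    _ = (2 * ∑' k : ℤ, |1 / (k:ℝ) ^ q|) / (n:ℝ) ^ p := by
        congr 1
        have : (∑' k : ℤ, |1 / ((2 * (n:ℤ) - k : ℤ) : ℝ) ^ q|) = ∑' k : ℤ, |1 / (k:ℝ) ^ q| := by
          have := (Equiv.subLeft (2 * (n:ℤ))).tsum_eq (fun k : ℤ => |1 / (k:ℝ) ^ q|)
          simpa using this
        rw [this]; ring
end

section
/- Let ρ ∈ (0, 1/10) be fixed and t ∈ [0, ρ]. Then for every point ξ = 2πn + t + 3ρe^{iα} with α ∈ (−π, π] (i.e., ξ on the circle of radius 3ρ centered at 2πn + t), one has |2cos ξ − 2cos t| > 2ρ², provided ρ is sufficiently small. -/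
open Real Complex

lemma my_sinh_sq_ge (y : ℝ) : y ^ 2 ≤ Real.sinh y ^ 2 := by
  rcases le_or_gt 0 y with h | h
  · have h' : y ≤ Real.sinh y := Real.self_le_sinh_iff.2 h
    nlinarith
  · have h0 : (0:ℝ) ≤ -y := by linarith
    have h' : -y ≤ Real.sinh (-y) := Real.self_le_sinh_iff.2 h0
    rw [Real.sinh_neg] at h'
    nlinarith

lemma my_sin_sq_ge (u : ℝ) (hu : u ^ 2 ≤ 1) :
    u ^ 2 * (1 - u ^ 2 / 2) ≤ Real.sin u ^ 2 := by
  have key : ∀ v : ℝ, 0 < v → v ≤ 1 → v ^ 2 * (1 - v ^ 2 / 2) ≤ Real.sin v ^ 2 := by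
    intro v hv hv1
    have h : v - v ^ 3 / 4 < Real.sin v := by
      have := Real.sin_gt_sub_cube hv; nlinarith [pow_pos hv 3]
    have hv2 : v ^ 2 ≤ 1 := by nlinarith
    have hpos : 0 ≤ v - v ^ 3 / 4 := by
      nlinarith [mul_nonneg hv.le (sub_nonneg.2 hv2)]
    nlinarith [sq_nonneg (v ^ 2)]
  rcases lt_trichotomy u 0 with h | h | h
  · have h1 : -u ≤ 1 := by nlinarith
    have := key (-u) (by linarith) h1
    rw [Real.sin_neg] at this
    nlinarith
  · simp [h]
  · have h1 : u ≤ 1 := by nlinarith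
    exact key u h h1

lemma my_abs_sin_sq (a b : ℝ) :
    ‖Complex.sin ((a : ℂ) + (b : ℂ) * Complex.I)‖ ^ 2
      = Real.sin a ^ 2 + Real.sinh b ^ 2 := by
  have h : Complex.sin ((a : ℂ) + (b : ℂ) * Complex.I)
      = ((Real.sin a * Real.cosh b : ℝ) : ℂ)
        + ((Real.cos a * Real.sinh b : ℝ) : ℂ) * Complex.I := by
    rw [Complex.sin_add, Complex.cos_mul_I, Complex.sin_mul_I]
    push_cast [Complex.ofReal_sin, Complex.ofReal_cos, Complex.ofReal_sinh,
      Complex.ofReal_cosh]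
    ring
  rw [h, Complex.sq_norm, Complex.normSq_add_mul_I]
  have h1 := Real.sin_sq_add_cos_sq a
  have h2 := Real.cosh_sq b
  nlinarith

lemma my_bd_x1 (ρ c : ℝ) (hρsq : ρ ^ 2 ≤ 1 / 100) (hc1 : c ^ 2 ≤ 1) :
    (3 * ρ / 2 * c) ^ 2 ≤ 9 / 400 := by
  nlinarith [sq_nonneg ρ, sq_nonneg c,
    mul_le_mul hρsq hc1 (sq_nonneg c) (by norm_num : (0:ℝ) ≤ 1/100)]

lemma my_bd_sum1 (ρ c s : ℝ) (hcs : c ^ 2 + s ^ 2 = 1) :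
    (3 * ρ / 2 * c) ^ 2 + (3 * ρ / 2 * s) ^ 2 = 9 / 4 * ρ ^ 2 := by
  nlinarith [hcs]

lemma my_bd_x2 (ρ t c : ℝ) (hρ : 0 < ρ) (ht : 0 ≤ t) (htρ : t ≤ ρ)
    (hcle : c ≤ 1) (hcge : -1 ≤ c) : (t + 3 * ρ / 2 * c) ^ 2 ≤ 25 / 4 * ρ ^ 2 := by
  nlinarith [mul_nonneg (mul_nonneg (by linarith : (0:ℝ) ≤ 3 * ρ) ht) (by linarith : (0:ℝ) ≤ 1 - c),
    mul_nonneg (sq_nonneg ρ) (mul_nonneg (by linarith : (0:ℝ) ≤ 1 - c) (by linarith : (0:ℝ) ≤ 1 + c)),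
    mul_nonneg (by linarith : (0:ℝ) ≤ ρ - t) (by linarith : (0:ℝ) ≤ ρ + t)]

lemma my_bd_sum2 (ρ t c s : ℝ) (hρ : 0 < ρ) (ht : 0 ≤ t) (htρ : t ≤ ρ)
    (hcge : -1 ≤ c) (hcs : c ^ 2 + s ^ 2 = 1) :
    ρ ^ 2 / 4 ≤ (t + 3 * ρ / 2 * c) ^ 2 + (3 * ρ / 2 * s) ^ 2 := by
  nlinarith [mul_nonneg (mul_nonneg (by linarith : (0:ℝ) ≤ 3 * ρ) ht) (by linarith : (0:ℝ) ≤ 1 + c),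
    mul_nonneg ht (by linarith : (0:ℝ) ≤ ρ - t)]

lemma my_bd_A1 (ρ x1 y S1 Sh : ℝ) (hρsq : ρ ^ 2 ≤ 1 / 100) (hx1sq : x1 ^ 2 ≤ 9 / 400)
    (hsum1 : x1 ^ 2 + y ^ 2 = 9 / 4 * ρ ^ 2)
    (hs1 : x1 ^ 2 * (1 - x1 ^ 2 / 2) ≤ S1) (hsh : y ^ 2 ≤ Sh) :
    2 * ρ ^ 2 ≤ S1 + Sh := by
  nlinarith [mul_le_mul_of_nonneg_right hx1sq (sq_nonneg x1), sq_nonneg y]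

lemma my_bd_A2 (ρ x2 y S2 Sh : ℝ) (hρsq : ρ ^ 2 ≤ 1 / 100) (hx2sq : x2 ^ 2 ≤ 25 / 4 * ρ ^ 2)
    (hsum2 : ρ ^ 2 / 4 ≤ x2 ^ 2 + y ^ 2)
    (hs2 : x2 ^ 2 * (1 - x2 ^ 2 / 2) ≤ S2) (hsh : y ^ 2 ≤ Sh) :
    ρ ^ 2 / 5 ≤ S2 + Sh := by
  nlinarith [mul_le_mul_of_nonneg_right hx2sq (sq_nonneg x2),
    mul_le_mul_of_nonneg_right hρsq (sq_nonneg x2), sq_nonneg y]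

lemma my_bd_final (ρ B1 B2 : ℝ) (hρ : 0 < ρ) (hB1 : 2 * ρ ^ 2 ≤ B1 ^ 2)
    (hB2 : ρ ^ 2 / 5 ≤ B2 ^ 2) (hB1n : 0 ≤ B1) (hB2n : 0 ≤ B2) :
    2 * ρ ^ 2 < 4 * B2 * B1 := by
  have key : (2 * ρ ^ 2) ^ 2 < (4 * B2 * B1) ^ 2 := by
    have hm : ρ ^ 2 / 5 * (2 * ρ ^ 2) ≤ B2 ^ 2 * B1 ^ 2 :=
      mul_le_mul hB2 hB1 (by positivity) (sq_nonneg B2)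
    nlinarith [pow_pos hρ 4]
  exact lt_of_pow_lt_pow_left₀ 2 (by positivity) key

set_option maxHeartbeats 1000000 in
/-- Inequality (16): for sufficiently small ρ ∈ (0, 1/10), t ∈ [0, ρ], any integer n and
any point ξ = 2πn + t + 3ρe^{iα} on the circle of radius 3ρ centered at 2πn + t,
one has |2cos ξ − 2cos t| > 2ρ². -/
theorem stmt_2 :
    ∃ ρ₀ : ℝ, 0 < ρ₀ ∧ ρ₀ ≤ 1 / 10 ∧
      ∀ ρ : ℝ, 0 < ρ → ρ < ρ₀ →
        ∀ t : ℝ, 0 ≤ t → t ≤ ρ →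
          ∀ n : ℤ, ∀ α : ℝ, -π < α → α ≤ π →
            2 * ρ ^ 2 <
              ‖(2 * Complex.cos (((2 * π * (n : ℝ) + t : ℝ) : ℂ)
                  + 3 * (ρ : ℂ) * Complex.exp (Complex.I * (α : ℂ)))
                - 2 * Complex.cos ((t : ℝ) : ℂ))‖ := by
  refine ⟨1 / 10, by norm_num, le_refl _, ?_⟩
  intro ρ hρ hρ10 t ht htρ n α hα1 hα2
  set c := Real.cos α with hc
  set s := Real.sin α with hs
  set x1 : ℝ := 3 * ρ / 2 * c with hx1
  set x2 : ℝ := t + 3 * ρ / 2 * c with hx2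
  set y : ℝ := 3 * ρ / 2 * s with hy
  have harg : ((2 * π * (n : ℝ) + t : ℝ) : ℂ)
      + 3 * (ρ : ℂ) * Complex.exp (Complex.I * (α : ℂ))
      = (((t : ℂ) + 3 * (ρ : ℂ) * Complex.exp (Complex.I * (α : ℂ))))
        + (n : ℂ) * (2 * (π : ℂ)) := by
    push_cast
    ring
  rw [harg, Complex.cos_add_int_mul_two_pi]
  have hcs : c ^ 2 + s ^ 2 = 1 := by
    rw [hc, hs]; exact Real.cos_sq_add_sin_sq α
  have hexp : Complex.exp (Complex.I * (α : ℂ)) = (c : ℂ) + (s : ℂ) * Complex.I := by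
    rw [mul_comm, Complex.exp_mul_I, ← Complex.ofReal_cos, ← Complex.ofReal_sin]
  have hfac : 2 * Complex.cos ((t : ℂ) + 3 * (ρ : ℂ) * Complex.exp (Complex.I * (α : ℂ)))
      - 2 * Complex.cos ((t : ℝ) : ℂ)
      = -4 * Complex.sin ((x2 : ℂ) + (y : ℂ) * Complex.I)
          * Complex.sin ((x1 : ℂ) + (y : ℂ) * Complex.I) := by
    have h := Complex.cos_sub_cos ((t : ℂ) + 3 * (ρ : ℂ) * Complex.exp (Complex.I * (α : ℂ)))
      ((t : ℝ) : ℂ)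
    have e1 : (((t : ℂ) + 3 * (ρ : ℂ) * Complex.exp (Complex.I * (α : ℂ))) + ((t : ℝ) : ℂ)) / 2
        = (x2 : ℂ) + (y : ℂ) * Complex.I := by
      rw [hexp, hx2, hy]
      push_cast
      ring
    have e2 : (((t : ℂ) + 3 * (ρ : ℂ) * Complex.exp (Complex.I * (α : ℂ))) - ((t : ℝ) : ℂ)) / 2
        = (x1 : ℂ) + (y : ℂ) * Complex.I := by
      rw [hexp, hx1, hy]
      push_cast
      ring
    rw [e1, e2] at h
    calc 2 * Complex.cos ((t : ℂ) + 3 * (ρ : ℂ) * Complex.exp (Complex.I * (α : ℂ)))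
        - 2 * Complex.cos ((t : ℝ) : ℂ)
        = 2 * (Complex.cos ((t : ℂ) + 3 * (ρ : ℂ) * Complex.exp (Complex.I * (α : ℂ)))
            - Complex.cos ((t : ℝ) : ℂ)) := by ring
      _ = _ := by rw [h]; ring
  rw [hfac]
  -- auxiliary real bounds
  have hρsq : ρ ^ 2 ≤ 1 / 100 := by nlinarith
  have hc1 : c ^ 2 ≤ 1 := by nlinarith [sq_nonneg s]
  have hcle : c ≤ 1 := Real.cos_le_one α
  have hcge : -1 ≤ c := Real.neg_one_le_cos α
  have hx1sq : x1 ^ 2 ≤ 9 / 400 := by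
    rw [hx1]; exact my_bd_x1 ρ c hρsq hc1
  have hx2sq1 : x2 ^ 2 ≤ 25 / 4 * ρ ^ 2 := by
    rw [hx2]; exact my_bd_x2 ρ t c hρ ht htρ hcle hcge
  have h254 : 25 / 4 * ρ ^ 2 ≤ (1:ℝ) := by linarith
  have hx2sq : x2 ^ 2 ≤ 1 := le_trans hx2sq1 h254
  have hsum1 : x1 ^ 2 + y ^ 2 = 9 / 4 * ρ ^ 2 := by
    rw [hx1, hy]; exact my_bd_sum1 ρ c s hcs
  have hsum2 : ρ ^ 2 / 4 ≤ x2 ^ 2 + y ^ 2 := by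
    rw [hx2, hy]; exact my_bd_sum2 ρ t c s hρ ht htρ hcge hcs
  have hs1 := my_sin_sq_ge x1 (by linarith)
  have hs2 := my_sin_sq_ge x2 hx2sq
  have hsh := my_sinh_sq_ge y
  have hA1 : 2 * ρ ^ 2 ≤ Real.sin x1 ^ 2 + Real.sinh y ^ 2 :=
    my_bd_A1 ρ x1 y _ _ hρsq hx1sq hsum1 hs1 hsh
  have hA2 : ρ ^ 2 / 5 ≤ Real.sin x2 ^ 2 + Real.sinh y ^ 2 :=
    my_bd_A2 ρ x2 y _ _ hρsq hx2sq1 hsum2 hs2 hsh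
  -- finish
  set B1 := ‖Complex.sin ((x1 : ℂ) + (y : ℂ) * Complex.I)‖ with hB1def
  set B2 := ‖Complex.sin ((x2 : ℂ) + (y : ℂ) * Complex.I)‖ with hB2def
  have hB1 : 2 * ρ ^ 2 ≤ B1 ^ 2 := by rw [hB1def, my_abs_sin_sq]; exact hA1
  have hB2 : ρ ^ 2 / 5 ≤ B2 ^ 2 := by rw [hB2def, my_abs_sin_sq]; exact hA2
  have hB1n : 0 ≤ B1 := norm_nonneg _
  have hB2n : 0 ≤ B2 := norm_nonneg _
  have habs : ‖-4 * Complex.sin ((x2 : ℂ) + (y : ℂ) * Complex.I)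
      * Complex.sin ((x1 : ℂ) + (y : ℂ) * Complex.I)‖ = 4 * B2 * B1 := by
    rw [norm_mul, norm_mul, hB1def, hB2def]
    norm_num
  rw [habs]
  exact my_bd_final ρ B1 B2 hρ hB1 hB2 hB1n hB2n
end

section
/- Fix t ∈ [0, π]. The equation cos ξ = cos t has exactly 2 complex roots (counted with multiplicity) inside the circle {ξ ∈ ℂ : |ξ − (2πn + t)| = 3ρ} for each integer n ≥ 1, provided 0 < ρ < π/4 and 0 ≤ t ≤ ρ. -/
open Real Complex

lemma analyticAt_dslope_entire {f : ℂ → ℂ} (hf : Differentiable ℂ f) (a x : ℂ) :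
    AnalyticAt ℂ (dslope f a) x := by
  rcases eq_or_ne x a with rfl | hx
  · obtain ⟨p, hp⟩ := hf.analyticAt x
    exact ⟨_, hp.has_fpower_series_dslope_fslope⟩
  · have h : AnalyticAt ℂ (fun w => (f w - f a) / (w - a)) x :=
      ((hf.analyticAt x).sub analyticAt_const).div
        (analyticAt_id.sub analyticAt_const) (sub_ne_zero.mpr hx)
    refine h.congr ?_
    filter_upwards [isOpen_ne.mem_nhds hx] with w hw
    rw [dslope_of_ne _ hw, slope_def_field]

/-- For 0 < ρ < π/4, 0 ≤ t ≤ ρ, t ≤ π and n ≥ 1, the equation cos ξ = cos t has exactly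
2 roots (with multiplicity) inside the circle |ξ − (2πn + t)| = 3ρ: the function
cos ξ − cos t factors as (ξ − c)(ξ − z₂)·g(ξ) with g analytic and nonvanishing there. -/
theorem stmt_3 (ρ t : ℝ) (hρ0 : 0 < ρ) (hρ : ρ < π / 4) (ht0 : 0 ≤ t) (htρ : t ≤ ρ)
    (htπ : t ≤ π) (n : ℕ) (hn : 1 ≤ n) :
    ∃ z₁ z₂ : ℂ, ∃ g : ℂ → ℂ,
      ‖z₁ - ((2 * π * (n : ℝ) + t : ℝ) : ℂ)‖ < 3 * ρ ∧
      ‖z₂ - ((2 * π * (n : ℝ) + t : ℝ) : ℂ)‖ < 3 * ρ ∧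
      AnalyticOnNhd ℂ g {ξ : ℂ | ‖ξ - ((2 * π * (n : ℝ) + t : ℝ) : ℂ)‖ < 3 * ρ} ∧
      ∀ ξ : ℂ, ‖ξ - ((2 * π * (n : ℝ) + t : ℝ) : ℂ)‖ < 3 * ρ →
        g ξ ≠ 0 ∧
        Complex.cos ξ - Complex.cos ((t : ℝ) : ℂ) = (ξ - z₁) * (ξ - z₂) * g ξ := by
  have hπ : (0:ℝ) < π := Real.pi_pos
  set c : ℂ := ((2 * π * (n : ℝ) + t : ℝ) : ℂ) with hc
  set z₂ : ℂ := ((2 * π * (n : ℝ) - t : ℝ) : ℂ) with hz₂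
  set f₁ : ℂ → ℂ := fun w => Complex.sin ((w - (t:ℂ)) / 2) with hf₁
  set f₂ : ℂ → ℂ := fun w => Complex.sin ((w + (t:ℂ)) / 2) with hf₂
  have hdiff₁ : Differentiable ℂ f₁ :=
    Complex.differentiable_sin.comp ((differentiable_id.sub_const _).div_const _)
  have hdiff₂ : Differentiable ℂ f₂ :=
    Complex.differentiable_sin.comp ((differentiable_id.add_const _).div_const _)
  have h3ρ : 3 * ρ < 3 * π / 4 := by linarith
  -- sin (n π) = 0, cos (n π) ≠ 0
  have hsinnπ : Complex.sin ((n:ℂ) * (π:ℂ)) = 0 := by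
    rw [Complex.sin_eq_zero_iff]; exact ⟨(n:ℤ), by push_cast; ring⟩
  have hcosnπ : Complex.cos ((n:ℂ) * (π:ℂ)) ≠ 0 := by
    intro h
    have := Complex.sin_sq_add_cos_sq ((n:ℂ) * (π:ℂ))
    rw [hsinnπ, h] at this
    simpa using this
  -- values at c, z₂
  have hval₁ : f₁ c = 0 := by
    have hv : (c - (t:ℂ)) / 2 = (n:ℂ) * (π:ℂ) := by
      rw [hc]; push_cast; ring
    show Complex.sin ((c - (t:ℂ)) / 2) = 0
    rw [hv]; exact hsinnπ
  have hval₂ : f₂ z₂ = 0 := by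
    have hv : (z₂ + (t:ℂ)) / 2 = (n:ℂ) * (π:ℂ) := by
      rw [hz₂]; push_cast; ring
    show Complex.sin ((z₂ + (t:ℂ)) / 2) = 0
    rw [hv]; exact hsinnπ
  -- derivatives at c, z₂
  have hderiv₁ : deriv f₁ c = Complex.cos ((n:ℂ) * (π:ℂ)) / 2 := by
    have h1 : HasDerivAt (fun w : ℂ => (w - (t:ℂ)) / 2) (1 / 2) c := by
      simpa using ((hasDerivAt_id c).sub_const (t:ℂ)).div_const 2
    have h2 := (Complex.hasDerivAt_sin ((c - (t:ℂ)) / 2)).comp c h1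
    have he : (c - (t:ℂ)) / 2 = (n:ℂ) * (π:ℂ) := by rw [hc]; push_cast; ring
    rw [he] at h2
    have h3 := h2.deriv
    rw [show Complex.sin ∘ (fun w : ℂ => (w - (t:ℂ)) / 2) = f₁ from rfl] at h3
    rw [h3]; ring
  have hderiv₂ : deriv f₂ z₂ = Complex.cos ((n:ℂ) * (π:ℂ)) / 2 := by
    have h1 : HasDerivAt (fun w : ℂ => (w + (t:ℂ)) / 2) (1 / 2) z₂ := by
      simpa using ((hasDerivAt_id z₂).add_const (t:ℂ)).div_const 2
    have h2 := (Complex.hasDerivAt_sin ((z₂ + (t:ℂ)) / 2)).comp z₂ h1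
    have he : (z₂ + (t:ℂ)) / 2 = (n:ℂ) * (π:ℂ) := by rw [hz₂]; push_cast; ring
    rw [he] at h2
    have h3 := h2.deriv
    rw [show Complex.sin ∘ (fun w : ℂ => (w + (t:ℂ)) / 2) = f₂ from rfl] at h3
    rw [h3]; ring
  -- nonvanishing of f₁ on the punctured disk
  have hne₁ : ∀ ξ : ℂ, ‖ξ - c‖ < 3 * ρ → ξ ≠ c → f₁ ξ ≠ 0 := by
    intro ξ hξ hne h0
    rw [hf₁] at h0
    simp only [Complex.sin_eq_zero_iff] at h0
    obtain ⟨k, hk⟩ := h0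
    have hξeq : ξ = 2 * (k:ℂ) * (π:ℂ) + (t:ℂ) := by
      have : ξ - (t:ℂ) = 2 * ((k:ℂ) * (π:ℂ)) := by
        field_simp at hk; linear_combination hk
      linear_combination this
    have habs : ‖ξ - c‖ = |2 * π * ((k:ℝ) - (n:ℝ))| := by
      have heq : ξ - c = ((2 * π * ((k:ℝ) - (n:ℝ)) : ℝ) : ℂ) := by
        rw [hξeq, hc]; push_cast; ring
      rw [heq, Complex.norm_real, Real.norm_eq_abs]
    rw [habs] at hξ
    have hkn : k = (n:ℤ) := by
      by_contra hkn
      have h1 : (1:ℝ) ≤ |(k:ℝ) - (n:ℝ)| := by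
        have : ((k - (n:ℤ) : ℤ) : ℝ) = (k:ℝ) - (n:ℝ) := by push_cast; ring
        rw [← this, ← Int.cast_abs]
        exact_mod_cast Int.one_le_abs (sub_ne_zero.mpr hkn)
      have : 2 * π ≤ |2 * π * ((k:ℝ) - (n:ℝ))| := by
        rw [abs_mul, abs_of_pos (by linarith : (0:ℝ) < 2 * π)]
        nlinarith
      linarith
    apply hne
    rw [hξeq, hc, hkn]; push_cast; ring
  -- nonvanishing of f₂ on the disk minus z₂
  have hne₂ : ∀ ξ : ℂ, ‖ξ - c‖ < 3 * ρ → ξ ≠ z₂ → f₂ ξ ≠ 0 := by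
    intro ξ hξ hne h0
    rw [hf₂] at h0
    simp only [Complex.sin_eq_zero_iff] at h0
    obtain ⟨k, hk⟩ := h0
    have hξeq : ξ = 2 * (k:ℂ) * (π:ℂ) - (t:ℂ) := by
      have : ξ + (t:ℂ) = 2 * ((k:ℂ) * (π:ℂ)) := by
        field_simp at hk; linear_combination hk
      linear_combination this
    have habs : ‖ξ - c‖ = |2 * π * ((k:ℝ) - (n:ℝ)) - 2 * t| := by
      have heq : ξ - c = ((2 * π * ((k:ℝ) - (n:ℝ)) - 2 * t : ℝ) : ℂ) := by
        rw [hξeq, hc]; push_cast; ring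
      rw [heq, Complex.norm_real, Real.norm_eq_abs]
    rw [habs] at hξ
    have hkn : k = (n:ℤ) := by
      by_contra hkn
      have h1 : (1:ℝ) ≤ |(k:ℝ) - (n:ℝ)| := by
        have : ((k - (n:ℤ) : ℤ) : ℝ) = (k:ℝ) - (n:ℝ) := by push_cast; ring
        rw [← this, ← Int.cast_abs]
        exact_mod_cast Int.one_le_abs (sub_ne_zero.mpr hkn)
      have h2 : 2 * π ≤ |2 * π * ((k:ℝ) - (n:ℝ))| := by
        rw [abs_mul, abs_of_pos (by linarith : (0:ℝ) < 2 * π)]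
        nlinarith
      have h3 : |2 * π * ((k:ℝ) - (n:ℝ))| - |2 * t| ≤ |2 * π * ((k:ℝ) - (n:ℝ)) - 2 * t| :=
        abs_sub_abs_le_abs_sub _ _
      have h4 : |2 * t| = 2 * t := abs_of_nonneg (by linarith)
      linarith
    apply hne
    rw [hξeq, hz₂, hkn]; push_cast; ring
  -- the dslope functions
  set d₁ : ℂ → ℂ := dslope f₁ c with hd₁
  set d₂ : ℂ → ℂ := dslope f₂ z₂ with hd₂
  have hd₁ne : ∀ ξ : ℂ, ‖ξ - c‖ < 3 * ρ → d₁ ξ ≠ 0 := by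
    intro ξ hξ
    rcases eq_or_ne ξ c with rfl | hne
    · rw [hd₁, dslope_same, hderiv₁]
      exact div_ne_zero hcosnπ two_ne_zero
    · rw [hd₁, dslope_of_ne _ hne, slope_def_field, hval₁, sub_zero]
      exact div_ne_zero (hne₁ ξ hξ hne) (sub_ne_zero.mpr hne)
  have hd₂ne : ∀ ξ : ℂ, ‖ξ - c‖ < 3 * ρ → d₂ ξ ≠ 0 := by
    intro ξ hξ
    rcases eq_or_ne ξ z₂ with rfl | hne
    · rw [hd₂, dslope_same, hderiv₂]
      exact div_ne_zero hcosnπ two_ne_zero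
    · rw [hd₂, dslope_of_ne _ hne, slope_def_field, hval₂, sub_zero]
      exact div_ne_zero (hne₂ ξ hξ hne) (sub_ne_zero.mpr hne)
  refine ⟨c, z₂, fun ξ => -2 * d₂ ξ * d₁ ξ, ?_, ?_, ?_, ?_⟩
  · simp only [sub_self, norm_zero]; positivity
  · have heq : z₂ - c = ((-(2*t) : ℝ) : ℂ) := by rw [hz₂, hc]; push_cast; ring
    rw [heq]
    simp only [Complex.norm_real, Real.norm_eq_abs, abs_neg]
    rw [_root_.abs_of_nonneg (by linarith : (0:ℝ) ≤ 2 * t)]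
    linarith
  · intro ξ _
    exact (analyticAt_const.mul (analyticAt_dslope_entire hdiff₂ z₂ ξ)).mul
      (analyticAt_dslope_entire hdiff₁ c ξ)
  · intro ξ hξ
    refine ⟨mul_ne_zero (mul_ne_zero (by norm_num) (hd₂ne ξ hξ)) (hd₁ne ξ hξ), ?_⟩
    have e₁ : (ξ - c) * d₁ ξ = f₁ ξ := by
      have := sub_smul_dslope f₁ c ξ
      rw [smul_eq_mul] at this
      rw [hd₁, this, hval₁, sub_zero]
    have e₂ : (ξ - z₂) * d₂ ξ = f₂ ξ := by
      have := sub_smul_dslope f₂ z₂ ξ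
      rw [smul_eq_mul] at this
      rw [hd₂, this, hval₂, sub_zero]
    have key : Complex.cos ξ - Complex.cos ((t:ℝ) : ℂ)
        = -2 * f₂ ξ * f₁ ξ := Complex.cos_sub_cos ξ ((t:ℝ) : ℂ)
    rw [key, ← e₁, ← e₂]; ring
end

section
/- Suppose λ is a complex number with |λ − (2πn + t)²| < 15πnρ, where t ∈ [0, ρ], ρ is sufficiently small, and n is a sufficiently large positive integer. Then for every integer k with k ≠ 0 and k ≠ 2n, |λ − (2π(n−k) + t)²| > |k|·|2n − k|. -/
open Real

/-- Inequality (22)/(59): for sufficiently small ρ and sufficiently large n, if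
|λ − (2πn + t)²| < 15πnρ with t ∈ [0, ρ], then for every integer k ≠ 0, 2n,
|λ − (2π(n−k) + t)²| > |k|·|2n − k|. -/
theorem stmt_4 :
    ∃ ρ₀ : ℝ, 0 < ρ₀ ∧ ∃ N : ℕ, ∀ ρ : ℝ, 0 < ρ → ρ ≤ ρ₀ →
      ∀ n : ℕ, N ≤ n → ∀ t : ℝ, 0 ≤ t → t ≤ ρ →
        ∀ lam : ℂ, ‖lam - (((2 * π * (n : ℝ) + t) ^ 2 : ℝ) : ℂ)‖ < 15 * π * n * ρ →
          ∀ k : ℤ, k ≠ 0 → k ≠ 2 * (n : ℤ) →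
            (|(k : ℝ)| * |2 * (n : ℝ) - (k : ℝ)|) <
              ‖lam - (((2 * π * ((n : ℝ) - (k : ℝ)) + t) ^ 2 : ℝ) : ℂ)‖ := by
  refine ⟨1/4, by norm_num, 1, ?_⟩
  intro ρ hρ hρ₀ n hn t ht0 htρ lam hlam k hk0 hk2n
  have hπ := Real.pi_gt_three
  have ht4 : t ≤ 1/4 := le_trans htρ hρ₀
  have hn1 : (1:ℝ) ≤ n := by exact_mod_cast hn
  set K : ℝ := |(k:ℝ)| with hKdef
  set M : ℝ := |2 * (n:ℝ) - (k:ℝ)| with hMdef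
  have hK1 : (1:ℝ) ≤ K := by
    have : (1:ℤ) ≤ |k| := Int.one_le_abs hk0
    rw [hKdef, ← Int.cast_abs]
    exact_mod_cast this
  have hm0 : 2 * (n:ℤ) - k ≠ 0 := by omega
  have hM1 : (1:ℝ) ≤ M := by
    have h : (1:ℤ) ≤ |2 * (n:ℤ) - k| := Int.one_le_abs hm0
    have h2 : ((1:ℤ):ℝ) ≤ ((|2 * (n:ℤ) - k|:ℤ):ℝ) := by exact_mod_cast h
    rw [Int.cast_abs] at h2
    push_cast at h2
    rw [hMdef]
    linarith
  have hsum : 2 * (n:ℝ) ≤ K + M := by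
    have h := abs_add_le ((k:ℝ)) (2 * (n:ℝ) - (k:ℝ))
    have h2 : |(k:ℝ) + (2 * (n:ℝ) - (k:ℝ))| = 2 * (n:ℝ) := by
      rw [abs_of_nonneg] <;> [ring_nf; nlinarith]
    rw [h2] at h
    exact h
  have hKM : 2 * (n:ℝ) - 1 ≤ K * M := by nlinarith
  set a : ℝ := (2 * π * (n:ℝ) + t) ^ 2 with hadef
  set b : ℝ := (2 * π * ((n:ℝ) - (k:ℝ)) + t) ^ 2 with hbdef
  set m : ℝ := 2 * (n:ℝ) - (k:ℝ) with hmdef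
  have hab : a - b = 2 * π * k * (2 * π * m + 2 * t) := by
    rw [hadef, hbdef, hmdef]; ring
  -- lower bound on |2πm + 2t|
  have hmabs : 4 * M ≤ |2 * π * m + 2 * t| := by
    rcases le_or_gt 1 (2 * (n:ℤ) - k) with h | h
    · have hm1 : (1:ℝ) ≤ m := by rw [hmdef]; exact_mod_cast h
      have hMeq : M = m := by rw [hMdef, hmdef, abs_of_nonneg]; linarith
      rw [abs_of_nonneg (by nlinarith), hMeq]
      nlinarith
    · have h' : 2 * (n:ℤ) - k ≤ -1 := by omega
      have hm1 : m ≤ -1 := by rw [hmdef]; exact_mod_cast h'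
      have hMeq : M = -m := by rw [hMdef]; exact abs_of_nonpos (by linarith)
      rw [abs_of_nonpos (by nlinarith), hMeq]
      nlinarith
  -- triangle inequality
  have tri : ‖(a:ℂ) - (b:ℂ)‖ ≤
      ‖lam - (a:ℂ)‖ + ‖lam - (b:ℂ)‖ := by
    have h := norm_sub_le_norm_sub_add_norm_sub (a:ℂ) lam (b:ℂ)
    rwa [norm_sub_rev (a:ℂ) lam] at h
  have habs_ab : ‖(a:ℂ) - (b:ℂ)‖ = 2 * π * K * |2 * π * m + 2 * t| := by
    rw [← Complex.ofReal_sub, Complex.norm_real, Real.norm_eq_abs, hab, abs_mul, abs_mul, abs_mul,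
      abs_of_nonneg (le_of_lt pi_pos), abs_of_nonneg (by norm_num : (0:ℝ) ≤ 2)]
  have hla : ‖lam - (a:ℂ)‖ < 15 * π * n * ρ := hlam
  have h2 : (n:ℝ) ≤ K * M := by linarith
  have hρn : 15 * π * n * ρ ≤ 15 * π / 4 * (K * M) := by
    have h1 : (n:ℝ) * ρ ≤ (n:ℝ) * (1/4) :=
      mul_le_mul_of_nonneg_left hρ₀ (by linarith)
    calc 15 * π * n * ρ = (15 * π) * ((n:ℝ) * ρ) := by ring
      _ ≤ (15 * π) * ((n:ℝ) * (1/4)) := by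
          apply mul_le_mul_of_nonneg_left h1; positivity
      _ = 15 * π / 4 * (n:ℝ) := by ring
      _ ≤ 15 * π / 4 * (K * M) := by
          apply mul_le_mul_of_nonneg_left h2; positivity
  have hbig : 8 * π * (K * M) ≤ 2 * π * K * |2 * π * m + 2 * t| := by
    have h := mul_le_mul_of_nonneg_left hmabs
      (by positivity : (0:ℝ) ≤ 2 * π * K)
    calc 8 * π * (K * M) = 2 * π * K * (4 * M) := by ring
      _ ≤ 2 * π * K * |2 * π * m + 2 * t| := h
  have hlow : ‖lam - (b:ℂ)‖ > 8 * π * (K * M) - 15 * π / 4 * (K * M) := by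
    have h := tri
    rw [habs_ab] at h
    linarith
  have hKM0 : (0:ℝ) ≤ K * M := mul_nonneg (by linarith) (by linarith)
  have hstep : K * M * 1 ≤ K * M * (17 * π / 4) :=
    mul_le_mul_of_nonneg_left (by linarith) hKM0
  have heq : 8 * π * (K * M) - 15 * π / 4 * (K * M) = K * M * (17 * π / 4) := by ring
  have heq2 : K * M * 1 = K * M := by ring
  linarith
end

section
/- Let a, b ∈ ℂ and suppose either Re(ab) ≥ 0, or |Im(ab)| ≥ ε|ab| for some ε ∈ (0,1]. Then for every real r ≥ 0, |ab + r²| ≥ (ε/3)(|ab| + r²). -/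
/-- Inequality (69): if Re(ab) ≥ 0 or |Im(ab)| ≥ ε|ab| with ε ∈ (0,1], then for every
real r ≥ 0, |ab + r²| ≥ (ε/3)(|ab| + r²). -/
theorem stmt_7 (a b : ℂ) (ε : ℝ) (hε0 : 0 < ε) (hε1 : ε ≤ 1)
    (h : 0 ≤ (a * b).re ∨ ε * ‖a * b‖ ≤ |(a * b).im|)
    (r : ℝ) (hr : 0 ≤ r) :
    (ε / 3) * (‖a * b‖ + r ^ 2) ≤ ‖a * b + ((r ^ 2 : ℝ) : ℂ)‖ := by
  set z := a * b with hz
  set A := ‖z‖ with hA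
  set B := ‖z + ((r ^ 2 : ℝ) : ℂ)‖ with hB
  have hA0 : 0 ≤ A := norm_nonneg z
  have hB0 : 0 ≤ B := norm_nonneg _
  have hr2 : (0:ℝ) ≤ r ^ 2 := sq_nonneg r
  have hAsq : A ^ 2 = z.re ^ 2 + z.im ^ 2 := by
    rw [hA, Complex.sq_norm, Complex.normSq_apply]; ring
  have hBsq : B ^ 2 = (z.re + r ^ 2) ^ 2 + z.im ^ 2 := by
    rw [hB, Complex.sq_norm, Complex.normSq_apply]
    simp [Complex.add_re, Complex.add_im, pow_two, Complex.mul_re, Complex.mul_im]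
  have hIm : |z.im| ≤ B := by
    have := Complex.abs_im_le_norm (z + ((r ^ 2 : ℝ) : ℂ))
    rw [hB]
    have him : (z + ((r ^ 2 : ℝ) : ℂ)).im = z.im := by simp [pow_two, Complex.mul_im]
    rw [him] at this
    exact this
  have hRe : |z.re| ≤ A := Complex.abs_re_le_norm z
  have hsub : r ^ 2 - A ≤ B := by
    have h1 : ‖(z + ((r ^ 2 : ℝ) : ℂ)) + (-z)‖ ≤ B + A := by
      calc ‖(z + ((r ^ 2 : ℝ) : ℂ)) + (-z)‖
          ≤ B + ‖-z‖ := norm_add_le _ _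
        _ = B + A := by rw [norm_neg]
    have h2 : (z + ((r ^ 2 : ℝ) : ℂ)) + (-z) = ((r ^ 2 : ℝ) : ℂ) := by ring
    rw [h2] at h1
    have : ‖((r ^ 2 : ℝ) : ℂ)‖ = r ^ 2 := by
      rw [Complex.norm_real, Real.norm_eq_abs, abs_of_nonneg hr2]
    linarith [this ▸ h1]
  rcases h with hre | him
  · -- Re z ≥ 0
    have key : ((A + r ^ 2) / 3) ^ 2 ≤ B ^ 2 := by
      nlinarith [sq_nonneg (A - r ^ 2), sq_abs z.re, abs_nonneg z.re,
        mul_le_mul_of_nonneg_left hRe hA0, sq_nonneg (z.re - A)]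
    have h3 : (A + r ^ 2) / 3 ≤ B := by
      nlinarith [sq_nonneg (B - (A + r ^ 2) / 3)]
    nlinarith
  · rcases le_or_gt (r ^ 2) (2 * A) with hc | hc
    · -- r² ≤ 2A : B ≥ |Im z| ≥ εA ≥ ε(A+r²)/3
      nlinarith [mul_le_mul_of_nonneg_left hc (le_of_lt hε0)]
    · -- r² > 2A : B ≥ r² - A ≥ r²/2 ≥ (A+r²)/3
      nlinarith [mul_le_mul_of_nonneg_left (add_nonneg hA0 hr2) (le_of_lt hε0)]
end

section
/- Let H be a Hilbert space, (Ψ_n) a family of unit vectors in H indexed by n ∈ J (J finite), (Ψ*_n) vectors with sup over unit f of ∑_{n∈J} |⟨f, Ψ*_n⟩|² ≤ c₈, scalars α_n with |α_n|⁻¹ ≤ d, vectors h_n with ‖h_n‖ ≤ C·(ln|n|)/|n|, and suppose the vectors e_n = Ψ_n − u_n φ_n⁺ − v_n φ_n⁻ = h_n where (φ_n⁺)_{n∈J} and (φ_n⁻)_{n∈J} are two orthonormal families and |u_n|, |v_n| ≤ 2. Then the operator e(f) = ∑_{n∈J} α_n⁻¹ ⟨f, Ψ*_n⟩ Ψ_n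 satisfies ‖e‖ ≤ c₉ for a constant c₉ depending only on c₈, d, C (not on J). -/
open Real

/-- Summability of (log k / k)^2 over ℕ. -/
lemma logsq_summable_nat : Summable (fun k : ℕ => (Real.log k / k) ^ 2) := by
  have hs : Summable (fun k : ℕ => 16 * (1 / (k : ℝ) ^ ((3 : ℝ) / 2))) :=
    (Real.summable_one_div_nat_rpow.mpr (by norm_num)).mul_left 16
  refine Summable.of_nonneg_of_le (fun k => sq_nonneg _) (fun k => ?_) hs
  rcases Nat.eq_zero_or_pos k with rfl | hk
  · simp
  · have hk0 : (0 : ℝ) < k := by exact_mod_cast hk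
    have hlog : Real.log k ≤ 4 * (k : ℝ) ^ ((1 : ℝ) / 4) := by
      have h1 : Real.log ((k : ℝ) ^ ((1 : ℝ) / 4)) ≤ (k : ℝ) ^ ((1 : ℝ) / 4) - 1 :=
        Real.log_le_sub_one_of_pos (Real.rpow_pos_of_pos hk0 _)
      have h2 : Real.log ((k : ℝ) ^ ((1 : ℝ) / 4)) = (1 / 4) * Real.log k := by
        rw [Real.log_rpow hk0]
      nlinarith [Real.rpow_pos_of_pos hk0 ((1 : ℝ) / 4)]
    have hlog0 : 0 ≤ Real.log k := Real.log_nonneg (by exact_mod_cast hk)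
    have key : (Real.log k / k) ^ 2 ≤ (4 * (k : ℝ) ^ ((1 : ℝ) / 4) / k) ^ 2 := by
      gcongr
    refine key.trans (le_of_eq ?_)
    rw [div_pow, mul_pow]
    rw [← Real.rpow_natCast ((k : ℝ) ^ ((1 : ℝ) / 4)) 2, ← Real.rpow_natCast (k : ℝ) 2,
      ← Real.rpow_mul hk0.le]
    rw [eq_comm, mul_one_div, div_eq_div_iff (by positivity) (by positivity)]
    rw [mul_assoc, ← Real.rpow_add hk0]
    norm_num

lemma logsq_summable_int :
    Summable (fun n : ℤ => (Real.log |(n : ℝ)| / |(n : ℝ)|) ^ 2) := by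
  apply Summable.of_nat_of_neg
  · have := logsq_summable_nat
    refine this.congr fun n => ?_
    simp [Nat.abs_cast]
  · have := logsq_summable_nat
    refine this.congr fun n => ?_
    push_cast
    rw [abs_neg, Nat.abs_cast]

/-- The tsum constant. -/
noncomputable def logsqSum : ℝ := ∑' n : ℤ, (Real.log |(n : ℝ)| / |(n : ℝ)|) ^ 2

lemma sum_logsq_le (J : Finset ℤ) :
    ∑ n ∈ J, (Real.log |(n : ℝ)| / |(n : ℝ)|) ^ 2 ≤ logsqSum :=
  logsq_summable_int.sum_le_tsum J (fun n _ => sq_nonneg _)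

/-- Pythagoras for finite linear combinations of an orthonormal family. -/
lemma onorm_sum_sq {H : Type} [NormedAddCommGroup H] [InnerProductSpace ℂ H]
    {ι : Type*} {w : ι → H} (hw : Orthonormal ℂ w) (l : ι → ℂ) (s : Finset ι) :
    ‖∑ i ∈ s, l i • w i‖ ^ 2 = ∑ i ∈ s, ‖l i‖ ^ 2 := by
  have h := hw.inner_sum l l s
  have h2 : (‖∑ i ∈ s, l i • w i‖ : ℝ) ^ 2
      = RCLike.re (inner ℂ (∑ i ∈ s, l i • w i) (∑ i ∈ s, l i • w i) : ℂ) := by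
    rw [← @norm_sq_eq_re_inner ℂ]
  rw [h2, h, map_sum]
  refine Finset.sum_congr rfl fun i _ => ?_
  rw [RCLike.conj_mul]
  norm_cast

/-- Abstract content of Theorem 7: the projections e(f) = ∑_{n∈J} α_n⁻¹⟨f,Ψ*_n⟩Ψ_n are
bounded by a constant c₉ depending only on c₈, d, C (not on the finite index set J). -/
theorem stmt_19 (c₈ d C : ℝ) (hc₈ : 0 ≤ c₈) (hd : 0 ≤ d) (hC : 0 ≤ C) :
    ∃ c₉ : ℝ, ∀ (H : Type) (_ : NormedAddCommGroup H),
      ∀ (_ : InnerProductSpace ℂ H) (J : Finset ℤ)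
        (Ψ Ψs h φp φm : ℤ → H) (u v α : ℤ → ℂ),
        (∀ n ∈ J, ‖Ψ n‖ = 1) →
        (∀ f : H, ‖f‖ = 1 → ∑ n ∈ J, ‖(inner ℂ f (Ψs n) : ℂ)‖ ^ 2 ≤ c₈) →
        (∀ n ∈ J, α n ≠ 0 ∧ ‖(α n)⁻¹‖ ≤ d) →
        (∀ n ∈ J, ‖h n‖ ≤ C * Real.log |(n : ℝ)| / |(n : ℝ)|) →
        Orthonormal ℂ (fun n : J => φp (n : ℤ)) →
        Orthonormal ℂ (fun n : J => φm (n : ℤ)) →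
        (∀ n ∈ J, ‖u n‖ ≤ 2 ∧ ‖v n‖ ≤ 2) →
        (∀ n ∈ J, Ψ n - u n • φp n - v n • φm n = h n) →
        ∀ f : H, ‖∑ n ∈ J, ((α n)⁻¹ * (inner ℂ f (Ψs n) : ℂ)) • Ψ n‖ ≤ c₉ * ‖f‖ := by
  set S : ℝ := logsqSum with hS
  have hS0 : 0 ≤ S := tsum_nonneg fun n => sq_nonneg _
  set D : ℝ := Real.sqrt (d ^ 2 * c₈) with hDdef
  have hD0 : 0 ≤ D := Real.sqrt_nonneg _
  have hD2 : D ^ 2 = d ^ 2 * c₈ := Real.sq_sqrt (by positivity)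
  refine ⟨D * 4 + Real.sqrt (d ^ 2 * c₈ * (C ^ 2 * S)), ?_⟩
  intro H _ _ J Ψ Ψs h φp φm u v α hΨn hBess hα hh hop hom huv heq f
  set β : ℤ → ℂ := fun n => (α n)⁻¹ * (inner ℂ f (Ψs n) : ℂ) with hβdef
  -- Bessel bound for general f
  have hB : ∑ n ∈ J, ‖(inner ℂ f (Ψs n) : ℂ)‖ ^ 2 ≤ c₈ * ‖f‖ ^ 2 := by
    by_cases hf : f = 0
    · simp [hf]
    · have hfn : (0 : ℝ) < ‖f‖ := norm_pos_iff.mpr hf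
      set g : H := ((‖f‖ : ℂ))⁻¹ • f with hg
      have hgn : ‖g‖ = 1 := by
        rw [hg, norm_smul, norm_inv, Complex.norm_real, Real.norm_eq_abs,
          abs_of_nonneg hfn.le, inv_mul_cancel₀ hfn.ne']
      have key : ∀ n, ‖(inner ℂ f (Ψs n) : ℂ)‖ = ‖f‖ * ‖(inner ℂ g (Ψs n) : ℂ)‖ := by
        intro n
        rw [hg, inner_smul_left, norm_mul, RCLike.norm_conj, norm_inv, Complex.norm_real,
          Real.norm_eq_abs, abs_of_nonneg hfn.le]
        field_simp
      have := hBess g hgn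
      calc ∑ n ∈ J, ‖(inner ℂ f (Ψs n) : ℂ)‖ ^ 2
          = ‖f‖ ^ 2 * ∑ n ∈ J, ‖(inner ℂ g (Ψs n) : ℂ)‖ ^ 2 := by
            rw [Finset.mul_sum]; exact Finset.sum_congr rfl fun n _ => by rw [key n]; ring
        _ ≤ ‖f‖ ^ 2 * c₈ := by gcongr
        _ = c₈ * ‖f‖ ^ 2 := by ring
  -- bound on the coefficients
  have hβ2 : ∑ n ∈ J, ‖β n‖ ^ 2 ≤ d ^ 2 * c₈ * ‖f‖ ^ 2 := by
    have step : ∀ n ∈ J, ‖β n‖ ^ 2 ≤ d ^ 2 * ‖(inner ℂ f (Ψs n) : ℂ)‖ ^ 2 := by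
      intro n hn
      rw [hβdef]
      simp only [norm_mul, mul_pow]
      have := (hα n hn).2
      have h0 : (0 : ℝ) ≤ ‖(α n)⁻¹‖ := norm_nonneg _
      exact mul_le_mul_of_nonneg_right (pow_le_pow_left₀ h0 this 2) (sq_nonneg _)
    calc ∑ n ∈ J, ‖β n‖ ^ 2 ≤ ∑ n ∈ J, d ^ 2 * ‖(inner ℂ f (Ψs n) : ℂ)‖ ^ 2 :=
          Finset.sum_le_sum step
      _ = d ^ 2 * ∑ n ∈ J, ‖(inner ℂ f (Ψs n) : ℂ)‖ ^ 2 := (Finset.mul_sum _ _ _).symm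
      _ ≤ d ^ 2 * (c₈ * ‖f‖ ^ 2) := by
          apply mul_le_mul_of_nonneg_left hB (by positivity)
      _ = d ^ 2 * c₈ * ‖f‖ ^ 2 := by ring
  have hβ2' : 0 ≤ ∑ n ∈ J, ‖β n‖ ^ 2 := Finset.sum_nonneg fun n _ => sq_nonneg _
  -- decomposition
  have hdecomp : ∑ n ∈ J, β n • Ψ n
      = (∑ n ∈ J, (β n * u n) • φp n) + (∑ n ∈ J, (β n * v n) • φm n)
        + ∑ n ∈ J, β n • h n := by
    rw [← Finset.sum_add_distrib, ← Finset.sum_add_distrib]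
    refine Finset.sum_congr rfl fun n hn => ?_
    have hΨ' : Ψ n = u n • φp n + v n • φm n + h n := by
      have := heq n hn
      rw [← this]; abel
    rw [hΨ', smul_add, smul_add, smul_smul, smul_smul]
  -- orthonormal-part bounds
  have hortho : ∀ (φ : ℤ → H), Orthonormal ℂ (fun n : J => φ (n : ℤ)) → ∀ (w : ℤ → ℂ),
      (∀ n ∈ J, ‖w n‖ ≤ 2) → ‖∑ n ∈ J, (β n * w n) • φ n‖ ≤ 2 * D * ‖f‖ := by
    intro φ hφ w hw
    have e1 : ∑ n ∈ J, (β n * w n) • φ n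
        = ∑ i ∈ J.attach, (β (i : ℤ) * w (i : ℤ)) • φ (i : ℤ) :=
      (Finset.sum_attach J _).symm
    have e2 : ‖∑ n ∈ J, (β n * w n) • φ n‖ ^ 2 = ∑ n ∈ J, ‖β n * w n‖ ^ 2 := by
      rw [e1, onorm_sum_sq hφ (fun i : J => β (i : ℤ) * w (i : ℤ)) J.attach]
      exact Finset.sum_attach J fun n => ‖β n * w n‖ ^ 2
    have e3 : ∑ n ∈ J, ‖β n * w n‖ ^ 2 ≤ 4 * ∑ n ∈ J, ‖β n‖ ^ 2 := by
      rw [Finset.mul_sum]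
      refine Finset.sum_le_sum fun n hn => ?_
      rw [norm_mul, mul_pow]
      have h4 : ‖w n‖ ^ 2 ≤ 4 := by nlinarith [hw n hn, norm_nonneg (w n)]
      calc ‖β n‖ ^ 2 * ‖w n‖ ^ 2 ≤ ‖β n‖ ^ 2 * 4 :=
            mul_le_mul_of_nonneg_left h4 (sq_nonneg _)
        _ = 4 * ‖β n‖ ^ 2 := by ring
    have e4 : ‖∑ n ∈ J, (β n * w n) • φ n‖ ^ 2 ≤ (2 * D * ‖f‖) ^ 2 := by
      rw [e2]
      have : (2 * D * ‖f‖) ^ 2 = 4 * (d ^ 2 * c₈ * ‖f‖ ^ 2) := by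
        rw [mul_pow, mul_pow, hD2]; ring
      rw [this]
      nlinarith [hβ2]
    have := Real.sqrt_le_sqrt e4
    rwa [Real.sqrt_sq (norm_nonneg _), Real.sqrt_sq (by positivity)] at this
  -- error-part bound
  have herr : ‖∑ n ∈ J, β n • h n‖ ≤ Real.sqrt (d ^ 2 * c₈ * (C ^ 2 * S)) * ‖f‖ := by
    set b : ℤ → ℝ := fun n => C * Real.log |(n : ℝ)| / |(n : ℝ)| with hb
    have hb0 : ∀ n, 0 ≤ b n := by
      intro n
      rcases eq_or_ne n 0 with rfl | hn
      · simp [hb]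
      · have h1 : (1 : ℝ) ≤ |(n : ℝ)| := by
          rw [← Int.cast_abs]
          exact_mod_cast Int.one_le_abs (by exact_mod_cast hn)
        have := Real.log_nonneg h1
        have : 0 ≤ C * Real.log |(n : ℝ)| := mul_nonneg hC this
        exact div_nonneg this (abs_nonneg _)
    have hsumb : ∑ n ∈ J, b n ^ 2 ≤ C ^ 2 * S := by
      have : ∀ n, b n ^ 2 = C ^ 2 * (Real.log |(n : ℝ)| / |(n : ℝ)|) ^ 2 := by
        intro n; rw [hb]; ring
      calc ∑ n ∈ J, b n ^ 2
          = C ^ 2 * ∑ n ∈ J, (Real.log |(n : ℝ)| / |(n : ℝ)|) ^ 2 := by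
            rw [Finset.mul_sum]; exact Finset.sum_congr rfl fun n _ => this n
        _ ≤ C ^ 2 * S := by
            apply mul_le_mul_of_nonneg_left (sum_logsq_le J) (by positivity)
    have step1 : ‖∑ n ∈ J, β n • h n‖ ≤ ∑ n ∈ J, ‖β n‖ * b n := by
      refine (norm_sum_le _ _).trans (Finset.sum_le_sum fun n hn => ?_)
      rw [norm_smul]
      exact mul_le_mul_of_nonneg_left (hh n hn) (norm_nonneg _)
    have step2 : (∑ n ∈ J, ‖β n‖ * b n) ^ 2
        ≤ (∑ n ∈ J, ‖β n‖ ^ 2) * ∑ n ∈ J, b n ^ 2 :=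
      Finset.sum_mul_sq_le_sq_mul_sq J _ _
    have step3 : (∑ n ∈ J, ‖β n‖ * b n) ^ 2
        ≤ d ^ 2 * c₈ * ‖f‖ ^ 2 * (C ^ 2 * S) := by
      refine step2.trans ?_
      have hbnn : 0 ≤ ∑ n ∈ J, b n ^ 2 := Finset.sum_nonneg fun n _ => sq_nonneg _
      exact mul_le_mul hβ2 hsumb hbnn (by positivity)
    have hsum0 : 0 ≤ ∑ n ∈ J, ‖β n‖ * b n :=
      Finset.sum_nonneg fun n _ => mul_nonneg (norm_nonneg _) (hb0 n)
    have step4 : ∑ n ∈ J, ‖β n‖ * b n ≤ Real.sqrt (d ^ 2 * c₈ * (C ^ 2 * S)) * ‖f‖ := by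
      have he : d ^ 2 * c₈ * ‖f‖ ^ 2 * (C ^ 2 * S)
          = (Real.sqrt (d ^ 2 * c₈ * (C ^ 2 * S)) * ‖f‖) ^ 2 := by
        rw [mul_pow, Real.sq_sqrt (by positivity)]; ring
      rw [he] at step3
      have := Real.sqrt_le_sqrt step3
      rwa [Real.sqrt_sq hsum0, Real.sqrt_sq (by positivity)] at this
    exact step1.trans step4
  -- put it together
  calc ‖∑ n ∈ J, ((α n)⁻¹ * (inner ℂ f (Ψs n) : ℂ)) • Ψ n‖
      = ‖(∑ n ∈ J, (β n * u n) • φp n) + (∑ n ∈ J, (β n * v n) • φm n)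
          + ∑ n ∈ J, β n • h n‖ := by rw [← hdecomp]
    _ ≤ ‖(∑ n ∈ J, (β n * u n) • φp n) + (∑ n ∈ J, (β n * v n) • φm n)‖
          + ‖∑ n ∈ J, β n • h n‖ := norm_add_le _ _
    _ ≤ (‖∑ n ∈ J, (β n * u n) • φp n‖ + ‖∑ n ∈ J, (β n * v n) • φm n‖)
          + ‖∑ n ∈ J, β n • h n‖ := by gcongr; exact norm_add_le _ _
    _ ≤ (2 * D * ‖f‖ + 2 * D * ‖f‖) + Real.sqrt (d ^ 2 * c₈ * (C ^ 2 * S)) * ‖f‖ := by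
        gcongr
        · exact hortho φp hop u fun n hn => (huv n hn).1
        · exact hortho φm hom v fun n hn => (huv n hn).2
    _ = (D * 4 + Real.sqrt (d ^ 2 * c₈ * (C ^ 2 * S))) * ‖f‖ := by ring
end
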